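/- arXiv:1709.07716 — 3 statements merged into one kernel-verified Lean document; each statement's English description precedes it below -/
import Mathlib

section
/- Let K : ℝ² → ℝ be a continuous, symmetric, square-integrable probability density, H symmetric positive-definite, K_H(x) = |H|^{-1/2} K(H^{-1/2} x), and λ₀ : ℝ² → ℝ continuous and bounded. Then for fixed x, y ∈ ℝ², ∫ K_H(x−u) K_H(y−u) λ₀(u) du = |H|^{-1/2} λ₀(x) (K∘K)(H^{-1/2}(x−y)) + o(|H|^{-1/2}) as the entries of H tend to 0, where (K∘K) denotes the convolution K∗K. -/
open MeasureTheory Filter Asymptotics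

lemma aux_mulVec (M : Matrix (Fin 2) (Fin 2) ℝ) (hM : M.det ≠ 0) (f : (Fin 2 → ℝ) → ℝ) :
    ∫ w, f (M.mulVec w) = |M.det⁻¹| * ∫ u, f u := by
  have hInv : Invertible M := M.invertibleOfIsUnitDet (isUnit_iff_ne_zero.2 hM)
  let e : (Fin 2 → ℝ) ≃ₗ[ℝ] (Fin 2 → ℝ) := M.toLinearEquiv' hInv
  let me : (Fin 2 → ℝ) ≃ᵐ (Fin 2 → ℝ) := e.toContinuousLinearEquiv.toHomeomorph.toMeasurableEquiv
  have h1 : ∫ w, f (M.mulVec w) = ∫ w, f (me w) := by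
    refine integral_congr_ae (Eventually.of_forall fun w => ?_)
    congr 1
  have h2 : ∫ w, f (me w) = ∫ y, f y ∂(Measure.map me volume) :=
    (integral_map_equiv me f).symm
  have h3 : Measure.map me volume = Measure.map (Matrix.toLin' M) volume := by
    congr 1
  rw [h1, h2, h3, Real.map_matrix_volume_pi_eq_smul_volume_pi hM, integral_smul_measure,
    ENNReal.toReal_ofReal (abs_nonneg _), smul_eq_mul]

lemma aux_mulVec' (M : Matrix (Fin 2) (Fin 2) ℝ) (hM : M.det ≠ 0) (f : (Fin 2 → ℝ) → ℝ) :
    ∫ u, f u = |M.det| * ∫ w, f (M.mulVec w) := by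
  rw [aux_mulVec M hM f, ← mul_assoc, abs_inv, mul_inv_cancel₀ (by simpa using hM), one_mul]

lemma aux_L2_mul {f g : (Fin 2 → ℝ) → ℝ} (hf : MemLp f 2 volume) (hg : MemLp g 2 volume) :
    Integrable (fun w => f w * g w) volume := by
  have h : MemLp (f • g) 1 volume := by
    exact hg.smul hf
  exact memLp_one_iff_integrable.1 h

/-- for fixed `x, y`,
`∫ K_H(x−u) K_H(y−u) λ₀(u) du = |H|^{-1/2} λ₀(x) (K∘K)(H^{-1/2}(x−y)) + o(|H|^{-1/2})`
along symmetric positive-definite matrices `H n` with entries tending to `0`,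
where `(K∘K)(v) = ∫ K(w) K(v−w) dw` and `S n` is the square root of `H n`. -/
theorem kernel_product_expansion
    (K : (Fin 2 → ℝ) → ℝ) (hKcont : Continuous K)
    (hKsymm : ∀ u, K (-u) = K u)
    (hKnonneg : ∀ u, 0 ≤ K u)
    (hKdens : ∫ u, K u = 1)
    (hKL2 : MemLp K 2 volume)
    (H S : ℕ → Matrix (Fin 2) (Fin 2) ℝ)
    (hHpos : ∀ n, (H n).PosDef)
    (hSpos : ∀ n, (S n).PosDef)
    (hSsq : ∀ n, S n * S n = H n)
    (hHto0 : ∀ i j : Fin 2, Filter.Tendsto (fun n => H n i j) atTop (nhds 0))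
    (KH : ℕ → (Fin 2 → ℝ) → ℝ)
    (hKH : ∀ n x, KH n x = ((H n).det) ^ (-(1:ℝ)/2) * K ((S n)⁻¹.mulVec x))
    (KconvK : (Fin 2 → ℝ) → ℝ)
    (hconv : ∀ v, KconvK v = ∫ w, K w * K (v - w))
    (lam0 : (Fin 2 → ℝ) → ℝ)
    (hlamcont : Continuous lam0)
    (hlambdd : ∃ C, ∀ u, |lam0 u| ≤ C)
    (x y : Fin 2 → ℝ) :
    (fun n =>
        (∫ u, KH n (x - u) * KH n (y - u) * lam0 u) -
          ((H n).det) ^ (-(1:ℝ)/2) * lam0 x * KconvK ((S n)⁻¹.mulVec (x - y)))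
      =o[atTop] (fun n => ((H n).det) ^ (-(1:ℝ)/2)) := by
  classical
  obtain ⟨C, hC⟩ := hlambdd
  -- determinant facts
  have hdetS : ∀ n, 0 < (S n).det := fun n => (hSpos n).det_pos
  have hdetH : ∀ n, 0 < (H n).det := fun n => (hHpos n).det_pos
  have hdSS : ∀ n, (S n).det * (S n).det = (H n).det := by
    intro n; rw [← Matrix.det_mul, hSsq]
  have hpow : ∀ n, ((H n).det) ^ (-(1:ℝ)/2) = ((S n).det)⁻¹ := by
    intro n
    rw [← hdSS n, show (S n).det * (S n).det = (S n).det ^ (2:ℕ) by ring,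
      ← Real.rpow_natCast ((S n).det) 2, ← Real.rpow_mul (hdetS n).le]
    norm_num
    exact (Real.rpow_neg_one _)
  have hdetSne : ∀ n, (S n).det ≠ 0 := fun n => (hdetS n).ne'
  -- entries of S tend to 0
  have hSto0 : ∀ i j : Fin 2, Tendsto (fun n => S n i j) atTop (nhds 0) := by
    intro i j
    have hsq : ∀ n, (S n i j) ^ 2 ≤ H n i i := by
      intro n
      have hsymm : ∀ a b, S n a b = S n b a := by
        intro a b
        have := (hSpos n).1
        rw [Matrix.IsHermitian] at this
        conv_lhs => rw [← this]
        simp [Matrix.conjTranspose_apply]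
      have h2 : H n i i = ∑ k, S n i k ^ 2 := by
        rw [← hSsq n, Matrix.mul_apply]
        exact Finset.sum_congr rfl fun k _ => by rw [hsymm k i, sq]
      rw [h2]
      exact Finset.single_le_sum (f := fun k => S n i k ^ 2)
        (fun k _ => sq_nonneg _) (Finset.mem_univ j)
    have h1 : Tendsto (fun n => Real.sqrt (H n i i)) atTop (nhds 0) := by
      have := (hHto0 i i).sqrt
      simpa using this
    refine squeeze_zero_norm (fun n => ?_) h1
    rw [Real.norm_eq_abs, ← Real.sqrt_sq_eq_abs]
    exact Real.sqrt_le_sqrt (hsq n)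
  -- basic integrability
  have hC0 : 0 ≤ C := le_trans (abs_nonneg _) (hC x)
  have hKint : Integrable K volume := by
    by_contra h
    rw [integral_undef h] at hKdens
    norm_num at hKdens
  set v : ℕ → (Fin 2 → ℝ) := fun n => (S n)⁻¹.mulVec (y - x) with hv
  have hKv2 : ∀ n, MemLp (fun w => K (v n + w)) 2 volume := fun n =>
    hKL2.comp_measurePreserving (measurePreserving_add_left volume (v n))
  have hP_int : ∀ n, Integrable (fun w => K w * K (v n + w)) volume :=
    fun n => aux_L2_mul hKL2 (hKv2 n)
  have hmulVec_cont : ∀ n, Continuous fun w : Fin 2 → ℝ => (S n).mulVec w := by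
    intro n
    exact LinearMap.continuous_on_pi ((S n).mulVecLin)
  have hlam_cont : ∀ n, Continuous fun w : Fin 2 → ℝ => lam0 (x - (S n).mulVec w) :=
    fun n => hlamcont.comp (continuous_const.sub (hmulVec_cont n))
  have hQ_int : ∀ n,
      Integrable (fun w => K w * K (v n + w) * lam0 (x - (S n).mulVec w)) volume := by
    intro n
    have := (hP_int n).bdd_mul ((hlam_cont n).aestronglyMeasurable)
      (Eventually.of_forall fun w => by simpa [Real.norm_eq_abs] using hC _)
    simpa [mul_comm, mul_assoc, mul_left_comm] using this
  -- key identity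
  have key : ∀ n, (∫ u, KH n (x - u) * KH n (y - u) * lam0 u) -
      ((H n).det) ^ (-(1:ℝ)/2) * lam0 x * KconvK ((S n)⁻¹.mulVec (x - y))
      = ((H n).det) ^ (-(1:ℝ)/2) *
        ∫ w, K w * K (v n + w) * (lam0 (x - (S n).mulVec w) - lam0 x) := by
    intro n
    have hSinvS : ∀ w : Fin 2 → ℝ, (S n)⁻¹.mulVec ((S n).mulVec w) = w := by
      intro w
      rw [Matrix.mulVec_mulVec, Matrix.nonsing_inv_mul _ (isUnit_iff_ne_zero.2 (hdetSne n)), Matrix.one_mulVec]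
    have A1 : (∫ u, KH n (x - u) * KH n (y - u) * lam0 u)
        = ((S n).det)⁻¹ * ∫ w, K w * K (v n + w) * lam0 (x - (S n).mulVec w) := by
      have e1 : (∫ u, KH n (x - u) * KH n (y - u) * lam0 u)
          = ∫ u, (fun u => KH n (x - u) * KH n (y - u) * lam0 u) (x - u) :=
        (integral_sub_left_eq_self (fun u => KH n (x - u) * KH n (y - u) * lam0 u)
          volume x).symm
      rw [e1, aux_mulVec' (S n) (hdetSne n) _]
      have e3 : ∀ w : Fin 2 → ℝ,
          (fun u => KH n (x - u) * KH n (y - u) * lam0 u) (x - (S n).mulVec w)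
          = (((S n).det)⁻¹ * ((S n).det)⁻¹) *
            (K w * K (v n + w) * lam0 (x - (S n).mulVec w)) := by
        intro w
        have h1 : x - (x - (S n).mulVec w) = (S n).mulVec w := by abel
        have h2 : y - (x - (S n).mulVec w) = (y - x) + (S n).mulVec w := by abel
        simp only [h1, h2, hKH, hpow n]
        rw [Matrix.mulVec_add, hSinvS w, hv]
        ring
      simp only [e3]
      rw [integral_const_mul, abs_of_pos (hdetS n)]
      field_simp
    have A2 : KconvK ((S n)⁻¹.mulVec (x - y)) = ∫ w, K w * K (v n + w) := by
      rw [hconv]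
      refine integral_congr_ae (Eventually.of_forall fun w => ?_)
      have h1 : (S n)⁻¹.mulVec (x - y) = -(v n) := by
        rw [hv, show x - y = -(y - x) by abel, Matrix.mulVec_neg]
      rw [h1]
      show K w * K (-v n - w) = K w * K (v n + w)
      have h2 : -v n - w = -(v n + w) := by abel
      rw [h2, hKsymm]
    rw [A1, A2, hpow n]
    have e4 : (∫ w, K w * K (v n + w) * (lam0 (x - (S n).mulVec w) - lam0 x))
        = (∫ w, K w * K (v n + w) * lam0 (x - (S n).mulVec w))
          - lam0 x * ∫ w, K w * K (v n + w) := by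
      rw [← integral_const_mul, ← integral_sub (hQ_int n) ((hP_int n).const_mul (lam0 x))]
      refine integral_congr_ae (Eventually.of_forall fun w => ?_)
      ring
    rw [e4]
    ring
  -- remainder integral
  set J : ℕ → ℝ := fun n => ∫ w, K w * K (v n + w) * (lam0 (x - (S n).mulVec w) - lam0 x)
    with hJ
  have hh_bdd : ∀ n w, |lam0 (x - (S n).mulVec w) - lam0 x| ≤ 2 * C := by
    intro n w
    calc |lam0 (x - (S n).mulVec w) - lam0 x|
        ≤ |lam0 (x - (S n).mulVec w)| + |lam0 x| := abs_sub _ _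
      _ ≤ 2 * C := by have := hC (x - (S n).mulVec w); have := hC x; linarith
  have hg2 : ∀ n, MemLp (fun w => K w * |lam0 (x - (S n).mulVec w) - lam0 x|) 2 volume := by
    intro n
    have htop : MemLp (fun w => |lam0 (x - (S n).mulVec w) - lam0 x|) ⊤ volume :=
      memLp_top_of_bound (((hlam_cont n).sub continuous_const).abs.aestronglyMeasurable)
        (2 * C) (Eventually.of_forall fun w => by
          simpa [Real.norm_eq_abs, abs_abs] using hh_bdd n w)
    exact MemLp.smul htop hKL2
  have hconj : Real.HolderConjugate 2 2 := Real.HolderConjugate.two_two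
  have hstep4 : ∀ n, (∫ w, K (v n + w) ^ (2:ℝ)) = ∫ w, K w ^ (2:ℝ) := fun n =>
    MeasurePreserving.integral_comp (measurePreserving_add_left volume (v n))
      (MeasurableEquiv.addLeft (v n)).measurableEmbedding (fun w => K w ^ (2:ℝ))
  have hJle : ∀ n, ‖J n‖ ≤ (∫ w, K w ^ (2:ℝ)) ^ ((1:ℝ)/2) *
      (∫ w, (K w * |lam0 (x - (S n).mulVec w) - lam0 x|) ^ (2:ℝ)) ^ ((1:ℝ)/2) := by
    intro n
    have step1 : ‖J n‖ ≤ ∫ w, ‖K w * K (v n + w) * (lam0 (x - (S n).mulVec w) - lam0 x)‖ :=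
      norm_integral_le_integral_norm _
    have step2 : (∫ w, ‖K w * K (v n + w) * (lam0 (x - (S n).mulVec w) - lam0 x)‖)
        = ∫ w, K (v n + w) * (K w * |lam0 (x - (S n).mulVec w) - lam0 x|) := by
      refine integral_congr_ae (Eventually.of_forall fun w => ?_)
      show ‖K w * K (v n + w) * (lam0 (x - (S n).mulVec w) - lam0 x)‖
        = K (v n + w) * (K w * |lam0 (x - (S n).mulVec w) - lam0 x|)
      rw [Real.norm_eq_abs, abs_mul, abs_mul, abs_of_nonneg (hKnonneg w),
        abs_of_nonneg (hKnonneg (v n + w))]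
      ring
    have step3 :
        (∫ w, K (v n + w) * (K w * |lam0 (x - (S n).mulVec w) - lam0 x|))
        ≤ (∫ w, K (v n + w) ^ (2:ℝ)) ^ ((1:ℝ)/2) *
          (∫ w, (K w * |lam0 (x - (S n).mulVec w) - lam0 x|) ^ (2:ℝ)) ^ ((1:ℝ)/2) := by
      refine integral_mul_le_Lp_mul_Lq_of_nonneg hconj
        (Eventually.of_forall fun w => hKnonneg _)
        (Eventually.of_forall fun w => mul_nonneg (hKnonneg _) (abs_nonneg _)) ?_ ?_
      · simpa using hKv2 n
      · simpa using hg2 n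
    calc ‖J n‖ ≤ _ := step1
      _ = _ := step2
      _ ≤ _ := step3
      _ = _ := by rw [hstep4 n]
  -- dominated convergence
  have hDCT : Tendsto
      (fun n => ∫ w, (K w * |lam0 (x - (S n).mulVec w) - lam0 x|) ^ (2:ℝ))
      atTop (nhds 0) := by
    have hrw : ∀ n, (∫ w, (K w * |lam0 (x - (S n).mulVec w) - lam0 x|) ^ (2:ℝ))
        = ∫ w, (K w * |lam0 (x - (S n).mulVec w) - lam0 x|) ^ (2:ℕ) := by
      intro n
      refine integral_congr_ae (Eventually.of_forall fun w => ?_)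
      show (K w * |lam0 (x - (S n).mulVec w) - lam0 x|) ^ (2:ℝ)
        = (K w * |lam0 (x - (S n).mulVec w) - lam0 x|) ^ (2:ℕ)
      rw [show ((2:ℝ) = ((2:ℕ):ℝ)) by norm_num, Real.rpow_natCast]
    simp only [hrw]
    have hmain : Tendsto
        (fun n => ∫ w, (K w * |lam0 (x - (S n).mulVec w) - lam0 x|) ^ (2:ℕ))
        atTop (nhds (∫ _w : Fin 2 → ℝ, (0:ℝ))) := by
      refine tendsto_integral_of_dominated_convergence
        (fun w => (2 * C) ^ 2 * K w ^ 2) ?_ ?_ ?_ ?_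
      · intro n
        exact ((hKcont.mul ((hlam_cont n).sub continuous_const).abs).pow 2).aestronglyMeasurable
      · exact (hKL2.integrable_sq).const_mul _
      · intro n
        refine Eventually.of_forall fun w => ?_
        rw [Real.norm_eq_abs, abs_of_nonneg (by positivity)]
        have h1 : K w * |lam0 (x - (S n).mulVec w) - lam0 x| ≤ K w * (2 * C) :=
          mul_le_mul_of_nonneg_left (hh_bdd n w) (hKnonneg w)
        have h2 : 0 ≤ K w * |lam0 (x - (S n).mulVec w) - lam0 x| :=
          mul_nonneg (hKnonneg w) (abs_nonneg _)
        calc (K w * |lam0 (x - (S n).mulVec w) - lam0 x|) ^ 2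
            ≤ (K w * (2 * C)) ^ 2 := by
              exact pow_le_pow_left₀ h2 h1 2
          _ = (2 * C) ^ 2 * K w ^ 2 := by ring
      · refine Eventually.of_forall fun w => ?_
        have hSw : Tendsto (fun n => (S n).mulVec w) atTop (nhds 0) := by
          rw [tendsto_pi_nhds]
          intro i
          have : Tendsto (fun n => ∑ j, S n i j * w j) atTop (nhds (∑ j : Fin 2, 0 * w j)) := by
            refine tendsto_finset_sum _ fun j _ => ?_
            exact (hSto0 i j).mul_const (w j)
          simpa [Matrix.mulVec, dotProduct] using this
        have hxw : Tendsto (fun n => x - (S n).mulVec w) atTop (nhds x) := by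
          have := tendsto_const_nhds (x := x) (f := atTop (α := ℕ)).sub hSw
          simpa using this
        have hlam : Tendsto (fun n => lam0 (x - (S n).mulVec w) - lam0 x) atTop (nhds 0) := by
          have := ((hlamcont.tendsto x).comp hxw).sub_const (lam0 x)
          simpa using this
        have : Tendsto (fun n => (K w * |lam0 (x - (S n).mulVec w) - lam0 x|) ^ (2:ℕ))
            atTop (nhds ((K w * |(0:ℝ)|) ^ (2:ℕ))) :=
          ((tendsto_const_nhds.mul hlam.abs).pow 2)
        simpa using this
    simpa using hmain
  have hεto0 : Tendsto
      (fun n => (∫ w, (K w * |lam0 (x - (S n).mulVec w) - lam0 x|) ^ (2:ℝ)) ^ ((1:ℝ)/2))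
      atTop (nhds 0) := by
    have := hDCT.rpow_const (p := (1:ℝ)/2) (Or.inr (by norm_num))
    simpa [Real.zero_rpow (by norm_num : ((1:ℝ)/2) ≠ 0)] using this
  have hJ0 : Tendsto J atTop (nhds 0) := by
    refine squeeze_zero_norm hJle ?_
    have := hεto0.const_mul ((∫ w, K w ^ (2:ℝ)) ^ ((1:ℝ)/2))
    simpa using this
  -- conclusion
  have hne : ∀ n, ((H n).det) ^ (-(1:ℝ)/2) ≠ 0 := fun n =>
    (Real.rpow_pos_of_pos (hdetH n) _).ne'
  rw [Asymptotics.isLittleO_iff_tendsto (fun n h => absurd h (hne n))]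
  have heq : (fun n => ((∫ u, KH n (x - u) * KH n (y - u) * lam0 u) -
      ((H n).det) ^ (-(1:ℝ)/2) * lam0 x * KconvK ((S n)⁻¹.mulVec (x - y))) /
        ((H n).det ^ (-(1:ℝ)/2))) = J := by
    funext n
    rw [key n, mul_div_cancel_left₀ _ (hne n)]
  rw [heq]
  exact hJ0
end

section
/- Let N be a Poisson random variable with mean m > 0 and define A(m) = E[(1/N)·1_{N≠0}]. Then A(m) → 0 as m → ∞, and moreover m·A(m) → 1 as m → ∞. -/
open Filter

private lemma exp_tsum (x : ℝ) : Real.exp x = ∑' n : ℕ, x ^ n / n.factorial := by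
  rw [Real.exp_eq_exp_ℝ, NormedSpace.exp_eq_tsum_div]

private lemma shift2 (x : ℝ) :
    ∑' k : ℕ, x ^ (k + 2) / (k + 2).factorial = Real.exp x - 1 - x := by
  have hS := Real.summable_pow_div_factorial x
  have h := exp_tsum x
  rw [Summable.tsum_eq_zero_add hS, Summable.tsum_eq_zero_add ((summable_nat_add_iff 1).2 hS)] at h
  simp only [pow_zero, Nat.factorial_zero, pow_one] at h
  norm_num at h
  linarith

private lemma shift3 (x : ℝ) :
    ∑' k : ℕ, x ^ (k + 3) / (k + 3).factorial = Real.exp x - 1 - x - x ^ 2 / 2 := by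
  have hS2 : Summable (fun k : ℕ => x ^ (k + 2) / (k + 2).factorial) :=
    (summable_nat_add_iff 2).2 (Real.summable_pow_div_factorial x)
  have h := shift2 x
  rw [Summable.tsum_eq_zero_add hS2] at h
  simp only [show ∀ k : ℕ, k + 1 + 2 = k + 3 from fun _ => rfl] at h
  norm_num [show (0+2).factorial = 2 from rfl] at h
  linarith

/-- `A m = E[(1/N)·1_{N≠0}]` for `N ~ Poisson(m)`. -/
noncomputable def poissonA (m : ℝ) : ℝ :=
  ∑' k : ℕ, if k = 0 then 0 else (1 / (k : ℝ)) * (Real.exp (-m) * m ^ k / (Nat.factorial k))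

private lemma aux1 (k : ℕ) :
    (1:ℝ) / (k + 2).factorial ≤ 1 / (((k:ℝ) + 1) * (k + 1).factorial) := by
  have h1 : (0:ℝ) < ((k:ℝ) + 1) * (k + 1).factorial := by positivity
  apply one_div_le_one_div_of_le h1
  have h2 : ((k + 2).factorial : ℝ) = ((k:ℝ) + 2) * (k + 1).factorial := by
    rw [show k + 2 = (k+1) + 1 from rfl, Nat.factorial_succ]; push_cast; ring
  rw [h2]
  have : (0:ℝ) ≤ ((k+1).factorial : ℝ) := by positivity
  nlinarith

private lemma aux2 (k : ℕ) :
    (1:ℝ) / (((k:ℝ) + 1) * (k + 1).factorial) ≤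
      1 / (k + 2).factorial + 3 / (k + 3).factorial := by
  have hF : (0:ℝ) < ((k + 1).factorial : ℝ) := by positivity
  have h2 : ((k + 2).factorial : ℝ) = ((k:ℝ) + 2) * (k + 1).factorial := by
    rw [show k + 2 = (k+1) + 1 from rfl, Nat.factorial_succ]; push_cast; ring
  have h3 : ((k + 3).factorial : ℝ) = ((k:ℝ) + 3) * (((k:ℝ) + 2) * (k + 1).factorial) := by
    rw [show k + 3 = (k+2) + 1 from rfl, Nat.factorial_succ]; push_cast [h2]; ring
  rw [h2, h3]
  have ha : (0:ℝ) ≤ (k:ℝ) := Nat.cast_nonneg k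
  rw [div_add_div _ _ (by positivity) (by positivity),
    div_le_div_iff₀ (by positivity) (by positivity)]
  ring_nf
  nlinarith [sq_nonneg ((k:ℝ)), hF, mul_pos hF hF]

private lemma poissonA_rw (m : ℝ) (hm : 0 < m) :
    poissonA m =
      ∑' k : ℕ, (1 / ((k:ℝ) + 1)) * (Real.exp (-m) * m ^ (k + 1) / (k + 1).factorial) := by
  have hS := (Real.summable_pow_div_factorial m).mul_left (Real.exp (-m))
  have hf : Summable (fun k : ℕ =>
      if k = 0 then 0 else (1 / (k : ℝ)) * (Real.exp (-m) * m ^ k / k.factorial)) := by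
    apply Summable.of_nonneg_of_le _ _ hS
    · intro k
      rcases Nat.eq_zero_or_pos k with h | h
      · simp [h]
      · have : (0:ℝ) < k := by exact_mod_cast h
        have := Real.exp_pos (-m)
        rw [if_neg (Nat.pos_iff_ne_zero.mp h)]
        positivity
    · intro k
      rcases Nat.eq_zero_or_pos k with h | h
      · simp [h]; positivity
      · have hk : (1:ℝ) ≤ k := by exact_mod_cast h
        rw [if_neg (Nat.pos_iff_ne_zero.mp h)]
        have h1 : (1:ℝ) / k ≤ 1 := by rw [div_le_one (by linarith)]; linarith
        have h2 : (0:ℝ) ≤ Real.exp (-m) * m ^ k / k.factorial := by positivity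
        calc 1 / (k:ℝ) * (Real.exp (-m) * m ^ k / k.factorial)
            ≤ 1 * (Real.exp (-m) * m ^ k / k.factorial) :=
              mul_le_mul_of_nonneg_right h1 h2
          _ = Real.exp (-m) * (m ^ k / k.factorial) := by ring
  rw [poissonA, Summable.tsum_eq_zero_add hf]
  simp

private lemma bounds (m : ℝ) (hm : 0 < m) :
    1 - Real.exp (-m) - m * Real.exp (-m) ≤ m * poissonA m ∧
      m * poissonA m ≤ 1 + 3 / m := by
  set E := Real.exp (-m) with hEdef
  have hE : 0 < E := Real.exp_pos _
  have hEe : E * Real.exp m = 1 := by rw [hEdef, ← Real.exp_add]; simp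
  set u : ℕ → ℝ := fun k => (1 / ((k:ℝ) + 1)) * (E * m ^ (k + 1) / (k + 1).factorial)
    with hu_def
  have hA : m * poissonA m = ∑' k, m * u k := by
    rw [poissonA_rw m hm, tsum_mul_left]
  set g : ℕ → ℝ := fun k => E * (m ^ (k + 2) / (k + 2).factorial) with hg_def
  set b : ℕ → ℝ := fun k => (3 / m) * (E * (m ^ (k + 3) / (k + 3).factorial)) with hb_def
  have hgS : Summable g :=
    ((summable_nat_add_iff 2).2 (Real.summable_pow_div_factorial m)).mul_left E
  have hbS : Summable b :=
    (((summable_nat_add_iff 3).2 (Real.summable_pow_div_factorial m)).mul_left E).mul_left _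
  have hlow : ∀ k, g k ≤ m * u k := by
    intro k
    have hF : ((k + 1).factorial : ℝ) ≠ 0 := by positivity
    have hk1 : ((k:ℝ) + 1) ≠ 0 := by positivity
    have h1 : m * u k = (E * m ^ (k + 2)) * (1 / (((k:ℝ) + 1) * (k + 1).factorial)) := by
      rw [hu_def]; simp only [pow_succ]; field_simp
    have h2 : g k = (E * m ^ (k + 2)) * (1 / ((k + 2).factorial : ℝ)) := by
      rw [hg_def]; ring
    rw [h1, h2]
    exact mul_le_mul_of_nonneg_left (aux1 k) (by positivity)
  have hup : ∀ k, m * u k ≤ g k + b k := by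
    intro k
    have hF : ((k + 1).factorial : ℝ) ≠ 0 := by positivity
    have hk1 : ((k:ℝ) + 1) ≠ 0 := by positivity
    have h1 : m * u k = (E * m ^ (k + 2)) * (1 / (((k:ℝ) + 1) * (k + 1).factorial)) := by
      rw [hu_def]; simp only [pow_succ]; field_simp
    have h2 : g k + b k =
        (E * m ^ (k + 2)) * (1 / ((k + 2).factorial : ℝ) + 3 / ((k + 3).factorial : ℝ)) := by
      rw [hg_def, hb_def]
      have : m ^ (k + 3) = m ^ (k + 2) * m := by rw [pow_succ]
      field_simp [this]
      ring
    rw [h1, h2]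
    exact mul_le_mul_of_nonneg_left (aux2 k) (by positivity)
  have huS : Summable (fun k => m * u k) := by
    apply Summable.of_nonneg_of_le _ hup (hgS.add hbS)
    intro k
    have : (0:ℝ) ≤ u k := by rw [hu_def]; positivity
    positivity
  have hgsum : ∑' k, g k = E * (Real.exp m - 1 - m) := by
    rw [hg_def, tsum_mul_left, shift2]
  have hbsum : ∑' k, b k = (3 / m) * (E * (Real.exp m - 1 - m - m ^ 2 / 2)) := by
    rw [hb_def, tsum_mul_left, tsum_mul_left, shift3]
  constructor
  · have := Summable.tsum_le_tsum hlow hgS huS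
    rw [hgsum] at this
    rw [hA]
    nlinarith [this]
  · have := Summable.tsum_le_tsum hup huS (hgS.add hbS)
    rw [Summable.tsum_add hgS hbS, hgsum, hbsum] at this
    rw [hA]
    have h3m : 0 < 3 / m := by positivity
    have key : E * (Real.exp m - 1 - m - m ^ 2 / 2) ≤ 1 := by nlinarith
    have key2 : E * (Real.exp m - 1 - m) ≤ 1 := by nlinarith
    calc ∑' k, m * u k ≤ E * (Real.exp m - 1 - m)
          + 3 / m * (E * (Real.exp m - 1 - m - m ^ 2 / 2)) := this
      _ ≤ 1 + 3 / m * 1 := by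
          gcongr
      _ = 1 + 3 / m := by ring

/-- `A(m) → 0` and `m·A(m) → 1` as `m → ∞`. -/
theorem poissonA_tendsto :
    Tendsto poissonA atTop (nhds 0) ∧
      Tendsto (fun m => m * poissonA m) atTop (nhds 1) := by
  have l1 : Tendsto (fun m : ℝ => 1 - Real.exp (-m) - m * Real.exp (-m)) atTop (nhds 1) := by
    have a1 : Tendsto (fun m : ℝ => Real.exp (-m)) atTop (nhds 0) :=
      Real.tendsto_exp_neg_atTop_nhds_zero
    have a2 : Tendsto (fun m : ℝ => m * Real.exp (-m)) atTop (nhds 0) := by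
      simpa using Real.tendsto_pow_mul_exp_neg_atTop_nhds_zero 1
    have := (tendsto_const_nhds (x := (1:ℝ)) (f := atTop)).sub a1 |>.sub a2
    simpa using this
  have l2 : Tendsto (fun m : ℝ => 1 + 3 / m) atTop (nhds 1) := by
    have := (tendsto_const_nhds (x := (1:ℝ)) (f := atTop)).add
      ((tendsto_const_nhds (x := (3:ℝ))).div_atTop tendsto_id)
    simpa using this
  have h2 : Tendsto (fun m => m * poissonA m) atTop (nhds 1) := by
    apply tendsto_of_tendsto_of_tendsto_of_le_of_le' l1 l2
    · filter_upwards [eventually_gt_atTop 0] with m hm using (bounds m hm).1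
    · filter_upwards [eventually_gt_atTop 0] with m hm using (bounds m hm).2
  refine ⟨?_, h2⟩
  have h3 : Tendsto (fun m : ℝ => (m * poissonA m) * m⁻¹) atTop (nhds 0) := by
    have := h2.mul tendsto_inv_atTop_zero
    simpa using this
  apply h3.congr'
  filter_upwards [eventually_gt_atTop 0] with m hm
  field_simp
end

section
/- Let N be a Poisson random variable with mean m > 0 and define A(m) = E[(1/N)1_{N≠0}], B(m) = E[(1/N²)1_{N≠0}], C(m) = E[(1/N³)1_{N≠0}]. Then B(m) = o(A(m)) and C(m) = o(B(m)) as m → ∞; more precisely m²B(m) → 1 and m³C(m) → 1 as m → ∞. -/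
open Filter Asymptotics

/-- `E[N^{-p}·1_{N≠0}]` for `N ~ Poisson(m)`. -/
noncomputable def poissonInvMoment (p : ℕ) (m : ℝ) : ℝ :=
  ∑' k : ℕ, if k = 0 then 0 else (1 / (k : ℝ) ^ p) * (Real.exp (-m) * m ^ k / (Nat.factorial k))

/-! ### Auxiliary definitions and lemmas -/

/-- The Poisson pmf term. -/
noncomputable def pTerm (m : ℝ) (n : ℕ) : ℝ := Real.exp (-m) * m ^ n / (Nat.factorial n)

/-- The tail sum `∑_{n ≥ j} pTerm m n`, reindexed. -/
noncomputable def pTail (j : ℕ) (m : ℝ) : ℝ := ∑' k : ℕ, pTerm m (k + j)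

lemma pTerm_summable (m : ℝ) : Summable (pTerm m) := by
  have := (Real.summable_pow_div_factorial m).mul_left (Real.exp (-m))
  refine this.congr fun n => ?_
  simp [pTerm, mul_div_assoc]

lemma pTerm_nonneg {m : ℝ} (hm : 0 ≤ m) (n : ℕ) : 0 ≤ pTerm m n := by
  unfold pTerm; positivity

lemma pTerm_total (m : ℝ) : ∑' n : ℕ, pTerm m n = 1 := by
  have h1 : ∑' n : ℕ, pTerm m n = Real.exp (-m) * ∑' n : ℕ, m ^ n / (Nat.factorial n) := by
    rw [← tsum_mul_left]
    exact tsum_congr fun n => by simp [pTerm, mul_div_assoc]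
  rw [h1, show (∑' n : ℕ, m ^ n / (Nat.factorial n)) = Real.exp m by
    rw [Real.exp_eq_exp_ℝ, NormedSpace.exp_eq_tsum_div], ← Real.exp_add]
  simp

lemma pTail_eq (j : ℕ) (m : ℝ) :
    pTail j m = 1 - ∑ i ∈ Finset.range j, pTerm m i := by
  have h := Summable.sum_add_tsum_nat_add j (pTerm_summable m)
  rw [pTerm_total] at h
  unfold pTail
  linarith

lemma pTail_tendsto (j : ℕ) : Tendsto (fun m => pTail j m) atTop (nhds 1) := by
  have hsum : Tendsto (fun m => ∑ i ∈ Finset.range j, pTerm m i) atTop (nhds 0) := by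
    have h0 : Tendsto (fun m => ∑ i ∈ Finset.range j, pTerm m i) atTop
        (nhds (∑ i ∈ Finset.range j, (0 : ℝ))) := by
      refine tendsto_finset_sum _ fun i _ => ?_
      have hi := (Real.tendsto_pow_mul_exp_neg_atTop_nhds_zero i).div_const ((Nat.factorial i : ℝ))
      rw [zero_div] at hi
      exact hi.congr fun m => by unfold pTerm; ring
    simpa using h0
  have h1 : Tendsto (fun m : ℝ => 1 - ∑ i ∈ Finset.range j, pTerm m i) atTop (nhds (1 - 0)) :=
    tendsto_const_nhds.sub hsum
  rw [sub_zero] at h1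
  exact h1.congr fun m => (pTail_eq j m).symm

lemma shift_summable (j : ℕ) (m : ℝ) : Summable (fun k : ℕ => pTerm m (k + j)) :=
  (summable_nat_add_iff j).2 (pTerm_summable m)

lemma shift_summable' (j : ℕ) (m : ℝ) (hm : 0 < m) :
    Summable (fun k : ℕ => Real.exp (-m) * m ^ (k + 1) / (Nat.factorial (k + 1 + j))) := by
  refine ((shift_summable (j + 1) m).div_const (m ^ j)).congr fun k => ?_
  have hmj : (m : ℝ) ^ j ≠ 0 := pow_ne_zero _ hm.ne'
  unfold pTerm
  rw [show k + (j + 1) = k + 1 + j from by omega, pow_add]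
  field_simp

lemma shift_tsum (j : ℕ) (m : ℝ) (hm : 0 < m) :
    ∑' k : ℕ, Real.exp (-m) * m ^ (k + 1) / (Nat.factorial (k + 1 + j))
      = pTail (j + 1) m / m ^ j := by
  have hmj : (m : ℝ) ^ j ≠ 0 := pow_ne_zero _ hm.ne'
  unfold pTail
  rw [← tsum_div_const]
  refine tsum_congr fun k => ?_
  unfold pTerm
  rw [show k + (j + 1) = k + 1 + j from by omega, pow_add]
  field_simp
  ring

lemma one_div_pow_le_one (p k : ℕ) : (1 : ℝ) / ((k : ℝ) + 1) ^ p ≤ 1 := by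
  rw [div_le_one (by positivity)]
  exact one_le_pow₀ (by exact_mod_cast Nat.succ_le_succ (Nat.zero_le k))

lemma S_summable' (p : ℕ) (m : ℝ) (hm : 0 ≤ m) :
    Summable (fun k : ℕ => (1 / ((k : ℝ) + 1) ^ p) * pTerm m (k + 1)) := by
  refine Summable.of_nonneg_of_le (fun k => ?_) (fun k => ?_) (shift_summable 1 m)
  · exact mul_nonneg (by positivity) (pTerm_nonneg hm (k + 1))
  · exact mul_le_of_le_one_left (pTerm_nonneg hm (k + 1)) (one_div_pow_le_one p k)

lemma S_eq (p : ℕ) (m : ℝ) (hm : 0 ≤ m) :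
    poissonInvMoment p m = ∑' k : ℕ, (1 / ((k : ℝ) + 1) ^ p) * pTerm m (k + 1) := by
  have hs : Summable (fun k : ℕ => if k = 0 then 0 else
      (1 / (k : ℝ) ^ p) * (Real.exp (-m) * m ^ k / (Nat.factorial k))) := by
    refine Summable.of_nonneg_of_le (fun k => ?_) (fun k => ?_) (pTerm_summable m)
    · rcases Nat.eq_zero_or_pos k with h | h
      · simp [h]
      · rw [if_neg h.ne']
        have : (0:ℝ) ≤ pTerm m k := pTerm_nonneg hm k
        unfold pTerm at this
        have hk : (1:ℝ) ≤ (k : ℝ) := by exact_mod_cast h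
        positivity
    · rcases Nat.eq_zero_or_pos k with h | h
      · rw [if_pos h]; exact pTerm_nonneg hm k
      · rw [if_neg h.ne']
        have hk : (1:ℝ) ≤ (k : ℝ) := by exact_mod_cast h
        have h1 : (1 : ℝ) / (k : ℝ) ^ p ≤ 1 := by
          rw [div_le_one (by positivity)]
          exact one_le_pow₀ hk
        have h2 : (0:ℝ) ≤ pTerm m k := pTerm_nonneg hm k
        calc (1 / (k : ℝ) ^ p) * (Real.exp (-m) * m ^ k / (Nat.factorial k))
            = (1 / (k : ℝ) ^ p) * pTerm m k := rfl
          _ ≤ pTerm m k := mul_le_of_le_one_left h2 h1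
  rw [poissonInvMoment, Summable.tsum_eq_zero_add hs, if_pos rfl, zero_add]
  refine tsum_congr fun k => ?_
  rw [if_neg (Nat.succ_ne_zero k)]
  unfold pTerm
  push_cast
  ring

lemma term_lower (p k : ℕ) (m : ℝ) (hm : 0 ≤ m) :
    Real.exp (-m) * m ^ (k + 1) / (Nat.factorial (k + 1 + p))
      ≤ (1 / ((k : ℝ) + 1) ^ p) * pTerm m (k + 1) := by
  have hw : (0:ℝ) ≤ Real.exp (-m) * m ^ (k + 1) := by positivity
  have hnat : (k + 1).factorial * (k + 1) ^ p ≤ (k + 1 + p).factorial :=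
    le_trans (Nat.mul_le_mul_left _ (Nat.pow_le_pow_left (by omega) p))
      Nat.factorial_mul_pow_le_factorial
  have hcast : ((k : ℝ) + 1) ^ p * (Nat.factorial (k + 1) : ℝ) ≤ (Nat.factorial (k + 1 + p) : ℝ) := by
    have := (Nat.cast_le (α := ℝ)).2 hnat
    push_cast at this
    nlinarith [this]
  have h2 : (0:ℝ) < ((k : ℝ) + 1) ^ p * (Nat.factorial (k + 1) : ℝ) := by positivity
  calc Real.exp (-m) * m ^ (k + 1) / (Nat.factorial (k + 1 + p))
      ≤ Real.exp (-m) * m ^ (k + 1) / (((k : ℝ) + 1) ^ p * (Nat.factorial (k + 1) : ℝ)) := by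
        gcongr
    _ = (1 / ((k : ℝ) + 1) ^ p) * pTerm m (k + 1) := by unfold pTerm; ring

lemma term_upper (p C k : ℕ) (m : ℝ) (hm : 0 ≤ m)
    (h : Nat.factorial (k + 1 + (p + 1)) ≤ (k + 2 + p + C) * (k + 1) ^ p * Nat.factorial (k + 1)) :
    (1 / ((k : ℝ) + 1) ^ p) * pTerm m (k + 1)
      ≤ Real.exp (-m) * m ^ (k + 1) / (Nat.factorial (k + 1 + p))
        + (C : ℝ) * (Real.exp (-m) * m ^ (k + 1) / (Nat.factorial (k + 1 + (p + 1)))) := by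
  have hw : (0:ℝ) ≤ Real.exp (-m) * m ^ (k + 1) := by positivity
  have hF1 : (0:ℝ) < (Nat.factorial (k + 1 + p) : ℝ) := by
    exact_mod_cast (k + 1 + p).factorial_pos
  have hF2 : (0:ℝ) < (Nat.factorial (k + 1 + (p + 1)) : ℝ) := by
    exact_mod_cast (k + 1 + (p + 1)).factorial_pos
  have hF : (Nat.factorial (k + 1 + (p + 1)) : ℝ)
      = ((k : ℝ) + 2 + p) * (Nat.factorial (k + 1 + p) : ℝ) := by
    rw [show k + 1 + (p + 1) = (k + 1 + p) + 1 from by omega, Nat.factorial_succ]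
    push_cast
    ring
  have key : (1 : ℝ) / (((k : ℝ) + 1) ^ p * (Nat.factorial (k + 1) : ℝ))
      ≤ ((k : ℝ) + 2 + p + C) / (Nat.factorial (k + 1 + (p + 1)) : ℝ) := by
    rw [div_le_div_iff₀ (by positivity) hF2]
    have h' := (Nat.cast_le (α := ℝ)).2 h
    push_cast at h'
    nlinarith [h']
  have split : ((k : ℝ) + 2 + p + C) / (Nat.factorial (k + 1 + (p + 1)) : ℝ)
      = 1 / (Nat.factorial (k + 1 + p) : ℝ)
        + (C : ℝ) / (Nat.factorial (k + 1 + (p + 1)) : ℝ) := by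
    rw [hF]
    field_simp
  calc (1 / ((k : ℝ) + 1) ^ p) * pTerm m (k + 1)
      = (Real.exp (-m) * m ^ (k + 1))
          * (1 / (((k : ℝ) + 1) ^ p * (Nat.factorial (k + 1) : ℝ))) := by unfold pTerm; ring
    _ ≤ (Real.exp (-m) * m ^ (k + 1))
          * (((k : ℝ) + 2 + p + C) / (Nat.factorial (k + 1 + (p + 1)) : ℝ)) :=
        mul_le_mul_of_nonneg_left key hw
    _ = Real.exp (-m) * m ^ (k + 1) / (Nat.factorial (k + 1 + p))
        + (C : ℝ) * (Real.exp (-m) * m ^ (k + 1) / (Nat.factorial (k + 1 + (p + 1)))) := by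
        rw [split]; ring

lemma S_lower (p : ℕ) (m : ℝ) (hm : 0 < m) :
    pTail (p + 1) m / m ^ p ≤ poissonInvMoment p m := by
  rw [S_eq p m hm.le, ← shift_tsum p m hm]
  exact Summable.tsum_le_tsum (fun k => term_lower p k m hm.le) (shift_summable' p m hm)
    (S_summable' p m hm.le)

lemma S_upper (p C : ℕ)
    (h : ∀ k : ℕ, Nat.factorial (k + 1 + (p + 1))
      ≤ (k + 2 + p + C) * (k + 1) ^ p * Nat.factorial (k + 1))
    (m : ℝ) (hm : 0 < m) :
    poissonInvMoment p m
      ≤ pTail (p + 1) m / m ^ p + (C : ℝ) * (pTail (p + 1 + 1) m / m ^ (p + 1)) := by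
  rw [S_eq p m hm.le, ← shift_tsum p m hm, ← shift_tsum (p + 1) m hm, ← tsum_mul_left,
    ← Summable.tsum_add (shift_summable' p m hm) (((shift_summable' (p + 1) m hm)).mul_left (C : ℝ))]
  exact Summable.tsum_le_tsum (fun k => term_upper p C k m hm.le (h k)) (S_summable' p m hm.le)
    ((shift_summable' p m hm).add (((shift_summable' (p + 1) m hm)).mul_left (C : ℝ)))

lemma tendsto_main (p C : ℕ)
    (h : ∀ k : ℕ, Nat.factorial (k + 1 + (p + 1))
      ≤ (k + 2 + p + C) * (k + 1) ^ p * Nat.factorial (k + 1)) :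
    Tendsto (fun m => m ^ p * poissonInvMoment p m) atTop (nhds 1) := by
  have hlow : ∀ᶠ m : ℝ in atTop, pTail (p + 1) m ≤ m ^ p * poissonInvMoment p m := by
    filter_upwards [eventually_gt_atTop 0] with m hm
    have hS := S_lower p m hm
    have hp : (0:ℝ) < m ^ p := by positivity
    have := mul_le_mul_of_nonneg_left hS hp.le
    calc pTail (p + 1) m = m ^ p * (pTail (p + 1) m / m ^ p) := by field_simp
      _ ≤ m ^ p * poissonInvMoment p m := this
  have hup : ∀ᶠ m : ℝ in atTop, m ^ p * poissonInvMoment p m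
      ≤ pTail (p + 1) m + (C : ℝ) * pTail (p + 1 + 1) m / m := by
    filter_upwards [eventually_gt_atTop 0] with m hm
    have hS := S_upper p C h m hm
    have hp : (0:ℝ) < m ^ p := by positivity
    calc m ^ p * poissonInvMoment p m
        ≤ m ^ p * (pTail (p + 1) m / m ^ p + (C : ℝ) * (pTail (p + 1 + 1) m / m ^ (p + 1))) :=
          mul_le_mul_of_nonneg_left hS hp.le
      _ = pTail (p + 1) m + (C : ℝ) * pTail (p + 1 + 1) m / m := by
          rw [pow_succ]
          field_simp
  refine tendsto_of_tendsto_of_tendsto_of_le_of_le' (pTail_tendsto (p + 1)) ?_ hlow hup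
  have h1 : Tendsto (fun m : ℝ => (C : ℝ) * pTail (p + 1 + 1) m / m) atTop (nhds 0) :=
    Tendsto.div_atTop (tendsto_const_nhds.mul (pTail_tendsto (p + 1 + 1))) tendsto_id
  simpa using (pTail_tendsto (p + 1)).add h1

lemma natBound1 : ∀ k : ℕ, Nat.factorial (k + 1 + (1 + 1))
    ≤ (k + 2 + 1 + 3) * (k + 1) ^ 1 * Nat.factorial (k + 1) := by
  intro k
  rw [show k + 1 + (1 + 1) = (k + 2) + 1 from by omega, Nat.factorial_succ,
    show k + 2 = (k + 1) + 1 from by omega, Nat.factorial_succ]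
  have key : (k + 2 + 1) * (k + 1 + 1) ≤ (k + 2 + 1 + 3) * (k + 1) ^ 1 := by nlinarith
  calc (k + 2 + 1) * ((k + 1 + 1) * Nat.factorial (k + 1))
      = ((k + 2 + 1) * (k + 1 + 1)) * Nat.factorial (k + 1) := by ring
    _ ≤ ((k + 2 + 1 + 3) * (k + 1) ^ 1) * Nat.factorial (k + 1) := mul_le_mul_left key _
    _ = (k + 2 + 1 + 3) * (k + 1) ^ 1 * Nat.factorial (k + 1) := by ring

lemma natBound2 : ∀ k : ℕ, Nat.factorial (k + 1 + (2 + 1))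
    ≤ (k + 2 + 2 + 24) * (k + 1) ^ 2 * Nat.factorial (k + 1) := by
  intro k
  rw [show k + 1 + (2 + 1) = (k + 3) + 1 from by omega, Nat.factorial_succ,
    show k + 3 = (k + 2) + 1 from by omega, Nat.factorial_succ,
    show k + 2 = (k + 1) + 1 from by omega, Nat.factorial_succ]
  have key : (k + 3 + 1) * ((k + 2 + 1) * (k + 1 + 1)) ≤ (k + 2 + 2 + 24) * (k + 1) ^ 2 := by
    nlinarith
  calc (k + 3 + 1) * ((k + 2 + 1) * ((k + 1 + 1) * Nat.factorial (k + 1)))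
      = ((k + 3 + 1) * ((k + 2 + 1) * (k + 1 + 1))) * Nat.factorial (k + 1) := by ring
    _ ≤ ((k + 2 + 2 + 24) * (k + 1) ^ 2) * Nat.factorial (k + 1) := mul_le_mul_left key _
    _ = (k + 2 + 2 + 24) * (k + 1) ^ 2 * Nat.factorial (k + 1) := by ring

lemma natBound3 : ∀ k : ℕ, Nat.factorial (k + 1 + (3 + 1))
    ≤ (k + 2 + 3 + 115) * (k + 1) ^ 3 * Nat.factorial (k + 1) := by
  intro k
  rw [show k + 1 + (3 + 1) = (k + 4) + 1 from by omega, Nat.factorial_succ,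
    show k + 4 = (k + 3) + 1 from by omega, Nat.factorial_succ,
    show k + 3 = (k + 2) + 1 from by omega, Nat.factorial_succ,
    show k + 2 = (k + 1) + 1 from by omega, Nat.factorial_succ]
  have key : (k + 4 + 1) * ((k + 3 + 1) * ((k + 2 + 1) * (k + 1 + 1)))
      ≤ (k + 2 + 3 + 115) * (k + 1) ^ 3 := by
    nlinarith [Nat.zero_le (k ^ 3), Nat.zero_le (k ^ 2), Nat.zero_le k]
  calc (k + 4 + 1) * ((k + 3 + 1) * ((k + 2 + 1) * ((k + 1 + 1) * Nat.factorial (k + 1))))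
      = ((k + 4 + 1) * ((k + 3 + 1) * ((k + 2 + 1) * (k + 1 + 1)))) * Nat.factorial (k + 1) := by
        ring
    _ ≤ ((k + 2 + 3 + 115) * (k + 1) ^ 3) * Nat.factorial (k + 1) := mul_le_mul_left key _
    _ = (k + 2 + 3 + 115) * (k + 1) ^ 3 * Nat.factorial (k + 1) := by ring

/-- with `A(m) = E[N⁻¹1_{N≠0}]`, `B(m) = E[N⁻²1_{N≠0}]`,
`C(m) = E[N⁻³1_{N≠0}]` for `N ~ Poisson(m)`, one has `B = o(A)` and `C = o(B)`
as `m → ∞`; more precisely `m²B(m) → 1` and `m³C(m) → 1`. -/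
theorem poisson_inverse_moments :
    (fun m => poissonInvMoment 2 m) =o[atTop] (fun m => poissonInvMoment 1 m) ∧
    (fun m => poissonInvMoment 3 m) =o[atTop] (fun m => poissonInvMoment 2 m) ∧
    Tendsto (fun m => m ^ 2 * poissonInvMoment 2 m) atTop (nhds 1) ∧
    Tendsto (fun m => m ^ 3 * poissonInvMoment 3 m) atTop (nhds 1) := by
  have hA := tendsto_main 1 3 natBound1
  have hB := tendsto_main 2 24 natBound2
  have hC := tendsto_main 3 115 natBound3
  have pos_of : ∀ p C (hnat : ∀ k : ℕ, Nat.factorial (k + 1 + (p + 1))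
      ≤ (k + 2 + p + C) * (k + 1) ^ p * Nat.factorial (k + 1)),
      ∀ᶠ m : ℝ in atTop, 0 < poissonInvMoment p m := by
    intro p C hnat
    filter_upwards [(tendsto_main p C hnat).eventually
      (eventually_gt_nhds (by norm_num : (0:ℝ) < 1)), eventually_gt_atTop 0] with m h1 h2
    nlinarith [pow_pos h2 p]
  have hApos := pos_of 1 3 natBound1
  have hBpos := pos_of 2 24 natBound2
  have littleo : ∀ p : ℕ,
      Tendsto (fun m => m ^ (p + 1) * poissonInvMoment (p + 1) m) atTop (nhds 1) →
      Tendsto (fun m => m ^ p * poissonInvMoment p m) atTop (nhds 1) →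
      (∀ᶠ m : ℝ in atTop, 0 < poissonInvMoment p m) →
      (fun m => poissonInvMoment (p + 1) m) =o[atTop] (fun m => poissonInvMoment p m) := by
    intro p hnum hden hpos
    rw [isLittleO_iff_tendsto' (by
      filter_upwards [hpos] with m hm h
      exact absurd h hm.ne')]
    have key : Tendsto (fun m : ℝ =>
        (m ^ (p + 1) * poissonInvMoment (p + 1) m) / (m ^ p * poissonInvMoment p m) * m⁻¹)
        atTop (nhds 0) := by
      have := (hnum.div hden one_ne_zero).mul tendsto_inv_atTop_zero
      simpa using this
    refine key.congr' ?_
    filter_upwards [eventually_gt_atTop 0] with m hm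
    have hm' : m ≠ 0 := hm.ne'
    rcases eq_or_ne (poissonInvMoment p m) 0 with h | h
    · simp [h]
    · field_simp
      ring
  exact ⟨littleo 1 hB hA hApos, littleo 2 hC hB hBpos, hB, hC⟩
end
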